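/- The 4-dimensional complex Leibniz algebra R₃ ([e₁,e₁]=e₃, [e₂,e₁]=e₃, [e₃,e₁]=e₄) is not isomorphic to R₂ ([e₁,e₁]=e₃, [e₁,e₂]=e₄, [e₂,e₁]=e₃, [e₃,e₁]=e₄), since their right annihilators {x : [L,x]=0} have different dimensions. -/

import Mathlib

/-- The bracket of `R₃` as a bilinear map:
`[e₁,e₁]=e₃, [e₂,e₁]=e₃, [e₃,e₁]=e₄`, other products zero. -/
noncomputable def r3 : (Fin 4 → ℂ) →ₗ[ℂ] (Fin 4 → ℂ) →ₗ[ℂ] (Fin 4 → ℂ) :=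
  LinearMap.mk₂ ℂ (fun x y => ![0, 0, x 0 * y 0 + x 1 * y 0, x 2 * y 0])
    (by intro a b c; funext i; fin_cases i <;> simp <;> ring)
    (by intro t a b; funext i; fin_cases i <;> simp <;> ring)
    (by intro a b c; funext i; fin_cases i <;> simp <;> ring)
    (by intro t a b; funext i; fin_cases i <;> simp <;> ring)

/-- The bracket of `R₂` as a bilinear map:
`[e₁,e₁]=e₃, [e₁,e₂]=e₄, [e₂,e₁]=e₃, [e₃,e₁]=e₄`, other products zero. -/
noncomputable def r2 : (Fin 4 → ℂ) →ₗ[ℂ] (Fin 4 → ℂ) →ₗ[ℂ] (Fin 4 → ℂ) :=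
  LinearMap.mk₂ ℂ (fun x y => ![0, 0, x 0 * y 0 + x 1 * y 0, x 0 * y 1 + x 2 * y 0])
    (by intro a b c; funext i; fin_cases i <;> simp <;> ring)
    (by intro t a b; funext i; fin_cases i <;> simp <;> ring)
    (by intro a b c; funext i; fin_cases i <;> simp <;> ring)
    (by intro t a b; funext i; fin_cases i <;> simp <;> ring)

lemma ker3 : LinearMap.ker r3.flip =
    LinearMap.ker (LinearMap.proj 0 : (Fin 4 → ℂ) →ₗ[ℂ] ℂ) := by
  ext y
  simp only [LinearMap.mem_ker, LinearMap.ext_iff, LinearMap.flip_apply, LinearMap.zero_apply,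
    LinearMap.proj_apply]
  constructor
  · intro h
    have := congrFun (h ![1,0,0,0]) 2
    simpa [r3] using this
  · intro h x
    funext i
    fin_cases i <;> simp [r3, h]

lemma ker2 : LinearMap.ker r2.flip =
    LinearMap.ker ((LinearMap.proj 0 : (Fin 4 → ℂ) →ₗ[ℂ] ℂ).prod (LinearMap.proj 1)) := by
  ext y
  simp only [LinearMap.mem_ker, LinearMap.ext_iff, LinearMap.flip_apply, LinearMap.zero_apply,
    LinearMap.prod_apply, LinearMap.proj_apply, Function.prod, Prod.mk_eq_zero]
  constructor
  · intro h
    constructor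
    · have := congrFun (h ![1,0,0,0]) 2
      simpa [r2] using this
    · have := congrFun (h ![1,0,0,0]) 3
      simpa [r2] using this
  · intro ⟨h0, h1⟩ x
    funext i
    fin_cases i <;> simp [r2, h0, h1]

lemma fr3 : Module.finrank ℂ (LinearMap.ker r3.flip) = 3 := by
  have h := (LinearMap.proj 0 : (Fin 4 → ℂ) →ₗ[ℂ] ℂ).finrank_range_add_finrank_ker
  have hsurj : LinearMap.range (LinearMap.proj 0 : (Fin 4 → ℂ) →ₗ[ℂ] ℂ) = ⊤ := by
    rw [LinearMap.range_eq_top]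
    intro a
    exact ⟨![a,0,0,0], by simp⟩
  rw [hsurj] at h
  simp only [finrank_top, Module.finrank_self] at h
  have h4 : Module.finrank ℂ (Fin 4 → ℂ) = 4 := by simp
  rw [ker3]
  omega
  
lemma fr2 : Module.finrank ℂ (LinearMap.ker r2.flip) = 2 := by
  have h := ((LinearMap.proj 0 : (Fin 4 → ℂ) →ₗ[ℂ] ℂ).prod (LinearMap.proj 1)).finrank_range_add_finrank_ker
  have hsurj : LinearMap.range ((LinearMap.proj 0 : (Fin 4 → ℂ) →ₗ[ℂ] ℂ).prod (LinearMap.proj 1)) = ⊤ := by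
    rw [LinearMap.range_eq_top]
    intro ⟨a, b⟩
    exact ⟨![a,b,0,0], by simp⟩
  rw [hsurj] at h
  simp only [finrank_top] at h
  have : Module.finrank ℂ (ℂ × ℂ) = 2 := by simp
  have h4 : Module.finrank ℂ (Fin 4 → ℂ) = 4 := by simp
  rw [ker2]
  omega

set_option maxHeartbeats 1000000 in
/-- `R₃` is not isomorphic to `R₂`: their right annihilators
(`ker` of the flipped bracket) have different dimensions. -/
theorem stmt_15 :
    Module.finrank ℂ (LinearMap.ker r3.flip) ≠
        Module.finrank ℂ (LinearMap.ker r2.flip) ∧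
      ¬ ∃ f : (Fin 4 → ℂ) ≃ₗ[ℂ] (Fin 4 → ℂ),
          ∀ x y, f (r3 x y) = r2 (f x) (f y) := by
  have hne : Module.finrank ℂ (LinearMap.ker r3.flip) ≠
      Module.finrank ℂ (LinearMap.ker r2.flip) := by
    rw [fr3, fr2]; exact (by norm_num)
  refine ⟨hne, ?_⟩
  rintro ⟨f, hf⟩
  have hmap : Submodule.map (f : (Fin 4 → ℂ) →ₗ[ℂ] (Fin 4 → ℂ)) (LinearMap.ker r3.flip)
      = LinearMap.ker r2.flip := by
    ext y
    simp only [Submodule.mem_map, LinearMap.mem_ker, LinearMap.ext_iff, LinearMap.flip_apply,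
      LinearMap.zero_apply, LinearEquiv.coe_coe]
    constructor
    · rintro ⟨z, hz, rfl⟩ x
      have : r2 (f (f.symm x)) (f z) = f (r3 (f.symm x) z) := (hf _ _).symm
      rw [f.apply_symm_apply] at this
      rw [this, hz, map_zero]
    · intro h
      refine ⟨f.symm y, fun x => ?_, f.apply_symm_apply y⟩
      apply f.injective
      rw [hf, f.apply_symm_apply, h, map_zero]
  have := LinearEquiv.finrank_map_eq f (LinearMap.ker r3.flip)
  rw [hmap] at this
  exact hne this.symm
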